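/- Let n ≥ 4, r ≥ 1, and let A₁ = (1/√n)·diag(a₁,…,aₙ) with each aᵢ ∈ {-1,1}. For every matrix M ∈ ℝ^{n×n} with rank(M) ≤ 2r, it holds that |⟨A₁, M⟩| ≤ √(2r/n)·‖M‖_F. -/

import Mathlib

open Matrix

noncomputable def frob {m n : Type*} [Fintype m] [Fintype n] (A : Matrix m n ℝ) : ℝ :=
  Real.sqrt (∑ i, ∑ j, (A i j)^2)

def finner {m n : Type*} [Fintype m] [Fintype n] (A B : Matrix m n ℝ) : ℝ :=
  ∑ i, ∑ j, A i j * B i j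

lemma key {n : ℕ} (M : Matrix (Fin n) (Fin n) ℝ) :
    ∃ k : ℕ, k = M.rank ∧ ∃ u : Fin k → Fin n → ℝ,
      (∀ j l, ∑ i, u j i * u l i = if j = l then (1:ℝ) else 0) ∧
      (∀ q i, ∑ j, (∑ p, u j p * M p q) * u j i = M i q) := by
  classical
  let L : EuclideanSpace ℝ (Fin n) →ₗ[ℝ] EuclideanSpace ℝ (Fin n) :=
    (WithLp.linearEquiv 2 ℝ (Fin n → ℝ)).symm.toLinearMap ∘ₗ M.mulVecLin ∘ₗ
      (WithLp.linearEquiv 2 ℝ (Fin n → ℝ)).toLinearMap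
  let V : Submodule ℝ (EuclideanSpace ℝ (Fin n)) := LinearMap.range L
  have hfin : Module.finrank ℝ V = M.rank := by
    have : V = (LinearMap.range M.mulVecLin).map (WithLp.linearEquiv 2 ℝ (Fin n → ℝ)).symm.toLinearMap := by
      simp only [V, L, LinearMap.range_comp, LinearMap.range_eq_top.mpr (WithLp.linearEquiv 2 ℝ (Fin n → ℝ)).surjective, Submodule.map_top]
    rw [this, LinearEquiv.finrank_map_eq]
    rfl
  let b := stdOrthonormalBasis ℝ V
  have hinner : ∀ (x y : V), (inner (𝕜 := ℝ) x y : ℝ) = ∑ i, (x : EuclideanSpace ℝ (Fin n)) i * (y : EuclideanSpace ℝ (Fin n)) i := by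
    intro x y
    simp [Submodule.coe_inner, PiLp.inner_apply, RCLike.inner_apply, mul_comm]
  refine ⟨Module.finrank ℝ V, hfin, fun j i => (b j : EuclideanSpace ℝ (Fin n)) i, ?_, ?_⟩
  · intro j l
    have h := orthonormal_iff_ite.mp b.orthonormal j l
    rw [hinner] at h
    exact h
  · intro q i
    have hmem : (WithLp.toLp 2 (fun p => M p q) : EuclideanSpace ℝ (Fin n)) ∈ V := by
      refine ⟨WithLp.toLp 2 (Pi.single q 1), ?_⟩
      ext p
      show M.mulVec (Pi.single q 1) p = M p q
      simp [Matrix.mulVec_single]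
    set v : V := ⟨_, hmem⟩ with hv
    have h1 := b.sum_repr v
    have h2 := congrArg (Subtype.val) h1
    have h3 : (∑ j, b.repr v j * (b j : EuclideanSpace ℝ (Fin n)) i) = M i q := by
      have h2' : (∑ j, b.repr v j • (b j : EuclideanSpace ℝ (Fin n))) = (v : EuclideanSpace ℝ (Fin n)) := by
        rw [← h2]; push_cast [Submodule.coe_sum]; rfl
      have sum_apply' : ((∑ j, b.repr v j • (b j : EuclideanSpace ℝ (Fin n)))) i
          = ∑ j, b.repr v j * (b j : EuclideanSpace ℝ (Fin n)) i := by
        simp [WithLp.ofLp_sum, Finset.sum_apply]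
      rw [← sum_apply', h2']
    have h4 : ∀ j, b.repr v j = ∑ p, (b j : EuclideanSpace ℝ (Fin n)) p * M p q := by
      intro j
      rw [b.repr_apply_apply, hinner]
    rw [← h3]
    exact Finset.sum_congr rfl fun j _ => by rw [h4]

theorem stmt_7 {n : ℕ} (hn : 4 ≤ n) (r : ℕ) (hr : 1 ≤ r)
    (a : Fin n → ℝ) (ha : ∀ i, a i = 1 ∨ a i = -1)
    (A₁ : Matrix (Fin n) (Fin n) ℝ)
    (hA₁ : A₁ = (1 / Real.sqrt n) • Matrix.diagonal a)
    (M : Matrix (Fin n) (Fin n) ℝ) (hM : M.rank ≤ 2 * r) :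
    |finner A₁ M| ≤ Real.sqrt (2 * r / n) * frob M := by
  classical
  obtain ⟨k, hk, u, hortho, hexp⟩ := key M
  set s := ∑ i, a i * M i i with hs
  set F2 := ∑ i, ∑ j, (M i j)^2 with hF2def
  have hF2 : (0:ℝ) ≤ F2 := by positivity
  have hfinner : finner A₁ M = (1 / Real.sqrt n) * s := by
    subst hA₁
    simp only [finner, Matrix.smul_apply, Matrix.diagonal_apply, smul_eq_mul]
    rw [hs, Finset.mul_sum]
    refine Finset.sum_congr rfl fun i _ => ?_
    rw [Finset.sum_eq_single i (fun j _ hji => by simp [Ne.symm hji]) (by simp)]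
    simp only [if_true]
    ring
  have ha2 : ∀ i, a i ^ 2 = 1 := fun i => by rcases ha i with h | h <;> rw [h] <;> norm_num
  have hXY : (∑ j, ∑ i, (u j i * a i) * (∑ p, u j p * M p i)) = s := by
    rw [Finset.sum_comm, hs]
    refine Finset.sum_congr rfl fun i _ => ?_
    have e : ∀ j, (u j i * a i) * (∑ p, u j p * M p i)
        = a i * ((∑ p, u j p * M p i) * u j i) := fun j => by ring
    simp_rw [e]
    rw [← Finset.mul_sum, hexp i i]
  have hX2 : (∑ j, ∑ i, (u j i * a i)^2) = (k : ℝ) := by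
    have e : ∀ j, (∑ i, (u j i * a i)^2) = 1 := by
      intro j
      have h := hortho j j
      rw [if_pos rfl] at h
      calc ∑ i, (u j i * a i)^2 = ∑ i, u j i * u j i := by
            refine Finset.sum_congr rfl fun i _ => ?_
            rw [mul_pow, ha2, mul_one, sq]
        _ = 1 := h
    simp [e]
  have hY2 : (∑ j, ∑ i, (∑ p, u j p * M p i)^2) = F2 := by
    rw [Finset.sum_comm]
    have e : ∀ q, (∑ j, (∑ p, u j p * M p q)^2) = ∑ p, (M p q)^2 := by
      intro q
      symm
      calc ∑ p, (M p q)^2 = ∑ i, (∑ j, (∑ p, u j p * M p q) * u j i) * M i q := by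
            refine Finset.sum_congr rfl fun i _ => ?_
            rw [hexp q i, sq]
        _ = ∑ i, ∑ j, ((∑ p, u j p * M p q) * u j i) * M i q :=
            Finset.sum_congr rfl fun i _ => Finset.sum_mul _ _ _
        _ = ∑ j, ∑ i, ((∑ p, u j p * M p q) * u j i) * M i q := Finset.sum_comm
        _ = ∑ j, (∑ p, u j p * M p q)^2 := by
            refine Finset.sum_congr rfl fun j _ => ?_
            simp_rw [mul_assoc]
            rw [← Finset.mul_sum, sq]
    simp_rw [e]
    rw [hF2def, Finset.sum_comm]
  have hCS : s^2 ≤ (k : ℝ) * F2 := by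
    have h := Finset.sum_mul_sq_le_sq_mul_sq Finset.univ
      (fun p : Fin k × Fin n => u p.1 p.2 * a p.2)
      (fun p : Fin k × Fin n => ∑ q, u p.1 q * M q p.2)
    simp_rw [Fintype.sum_prod_type] at h
    rw [hXY, hX2, hY2] at h
    exact h
  have hk2r : (k : ℝ) ≤ 2 * r := by
    rw [hk]
    exact_mod_cast hM
  have habs : |s| ≤ Real.sqrt (2 * r) * Real.sqrt F2 := by
    rw [← Real.sqrt_sq_eq_abs, ← Real.sqrt_mul (by positivity) F2]
    exact Real.sqrt_le_sqrt (hCS.trans (mul_le_mul_of_nonneg_right hk2r hF2))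
  have hn0 : (0:ℝ) < n := by
    have : (4:ℝ) ≤ n := by exact_mod_cast hn
    linarith
  have hsn : (0:ℝ) < Real.sqrt n := Real.sqrt_pos.mpr hn0
  rw [hfinner, abs_mul, abs_of_nonneg (by positivity : (0:ℝ) ≤ 1 / Real.sqrt n)]
  have hdiv : Real.sqrt (2 * r / n) = Real.sqrt (2 * r) / Real.sqrt n :=
    Real.sqrt_div (by positivity : (0:ℝ) ≤ 2 * (r:ℝ)) _
  rw [hdiv]
  show 1 / Real.sqrt n * |s| ≤ Real.sqrt (2*r) / Real.sqrt n * frob M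
  rw [frob, ← hF2def]
  calc 1 / Real.sqrt n * |s| ≤ 1 / Real.sqrt n * (Real.sqrt (2*r) * Real.sqrt F2) :=
        mul_le_mul_of_nonneg_left habs (le_of_lt (one_div_pos.mpr hsn))
    _ = Real.sqrt (2*r) / Real.sqrt n * Real.sqrt F2 := by ring
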